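/- Let ħ, m > 0, n > 0, t ∈ ℝ, K ∈ ℝ², and 0 ≤ γ < 1. Then for all q ∈ ℝ², ℰ_γ(q) ≥ (ħ²/(2m))·(t − ‖K‖²/n), with equality if and only if q = −(1/n)·K. In particular, for all subcritical couplings the minimizing momentum-space origin q₀ = −K/n and the minimum energy density (ħ²/(2m))·(t − ‖K‖²/n) are independent of γ: the ground state of the free electron gas in the thermodynamic limit is unchanged by the coupling to the cavity. -/

import Mathlib

open scoped RealInnerProductSpace

/-- For subcritical coupling `0 ≤ γ < 1`, the energy density of the 2D free
electron gas coupled to a cavity mode is minimized exactly at the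
momentum-space origin `q₀ = −K/n`, with minimum value
`(ℏ²/(2m))(t − ‖K‖²/n)`, both independent of `γ`. -/
theorem ground_state_independent_of_cavity_coupling
    (ℏ m n t : ℝ) (hℏ : 0 < ℏ) (hm : 0 < m) (hn : 0 < n)
    (K : EuclideanSpace ℝ (Fin 2)) (γ : ℝ) (hγ₀ : 0 ≤ γ) (hγ₁ : γ < 1) :
    ∀ q : EuclideanSpace ℝ (Fin 2),
      ℏ ^ 2 / (2 * m) * (t + 2 * ⟪q, K⟫ + n * ‖q‖ ^ 2 - γ / n * ‖K + n • q‖ ^ 2)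
          ≥ ℏ ^ 2 / (2 * m) * (t - ‖K‖ ^ 2 / n)
      ∧ (ℏ ^ 2 / (2 * m) * (t + 2 * ⟪q, K⟫ + n * ‖q‖ ^ 2 - γ / n * ‖K + n • q‖ ^ 2)
            = ℏ ^ 2 / (2 * m) * (t - ‖K‖ ^ 2 / n)
          ↔ q = -(1 / n) • K) := by
  intro q
  have hc : (0:ℝ) < ℏ ^ 2 / (2 * m) := by positivity
  have hS : ‖K + n • q‖ ^ 2 = ‖K‖ ^ 2 + 2 * (n * ⟪q, K⟫) + n ^ 2 * ‖q‖ ^ 2 := by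
    rw [norm_add_sq_real, real_inner_smul_right, norm_smul, real_inner_comm]
    simp [mul_pow, abs_of_pos hn]
  have key : (t + 2 * ⟪q, K⟫ + n * ‖q‖ ^ 2 - γ / n * ‖K + n • q‖ ^ 2)
      - (t - ‖K‖ ^ 2 / n) = (1 - γ) / n * ‖K + n • q‖ ^ 2 := by
    rw [hS]; field_simp; ring
  have hnn : 0 ≤ (1 - γ) / n * ‖K + n • q‖ ^ 2 := by
    have : 0 ≤ 1 - γ := by linarith
    positivity
  constructor
  · have := mul_le_mul_of_nonneg_left (by linarith [key, hnn] :
      (t - ‖K‖ ^ 2 / n) ≤ t + 2 * ⟪q, K⟫ + n * ‖q‖ ^ 2 - γ / n * ‖K + n • q‖ ^ 2) hc.le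
    linarith
  · constructor
    · intro h
      have h' : (t + 2 * ⟪q, K⟫ + n * ‖q‖ ^ 2 - γ / n * ‖K + n • q‖ ^ 2)
          = (t - ‖K‖ ^ 2 / n) := by
        exact mul_left_cancel₀ hc.ne' h
      have hz : (1 - γ) / n * ‖K + n • q‖ ^ 2 = 0 := by linarith [key]
      have hcoef : (0:ℝ) < (1 - γ) / n := by
        have : 0 < 1 - γ := by linarith
        positivity
      have : ‖K + n • q‖ ^ 2 = 0 := by
        rcases mul_eq_zero.1 hz with h | h
        · exact absurd h hcoef.ne'
        · exact h
      have hzero : K + n • q = 0 := by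
        have := pow_eq_zero_iff (n := 2) (by norm_num) |>.1 this
        simpa [norm_eq_zero] using this
      have h2 : n • q = -K := by
        rw [add_eq_zero_iff_eq_neg] at hzero
        rw [hzero]; simp
      rw [neg_smul, ← smul_neg, ← h2, smul_smul]
      field_simp
      rw [one_smul]
    · intro h
      subst h
      have : K + n • (-(1 / n) • K) = 0 := by
        rw [smul_smul]
        field_simp
        simp
      rw [this]
      congr 1
      have : ⟪-(1 / n) • K, K⟫ = -(1/n) * ‖K‖^2 := by
        rw [real_inner_smul_left, real_inner_self_eq_norm_sq]
      rw [this]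
      simp [norm_smul]
      field_simp
      rw [abs_of_pos hn]
      ring
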